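/- arXiv:2308.04290 — 2 statements merged into one kernel-verified Lean document; each statement's English description precedes it below -/
import Mathlib

section
/- Let U ⊆ ℝ² be open and let ξ, φ : ℝ² → ℝ² be twice continuously differentiable on U. Then at every point x ∈ U the curl of the SALT operator B_ξφ := L_ξφ + T_ξφ satisfies curl(B_ξφ)(x) = (L_ξ(curl φ))(x) + (curl φ)(x)·(div ξ)(x); explicitly, ∂₁(B_ξφ)²(x) − ∂₂(B_ξφ)¹(x) = Σ_{j=1}^{2} ξ^j(x)·∂_j(∂₁φ² − ∂₂φ¹)(x) + (∂₁φ²(x) − ∂₂φ¹(x))·(∂₁ξ¹(x) + ∂₂ξ²(x)). -/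
noncomputable section

/-- Partial derivative in the first coordinate of a scalar function on `ℝ²`. -/
def pd1 (f : ℝ × ℝ → ℝ) (x : ℝ × ℝ) : ℝ := fderiv ℝ f x (1, 0)

/-- Partial derivative in the second coordinate of a scalar function on `ℝ²`. -/
def pd2 (f : ℝ × ℝ → ℝ) (x : ℝ × ℝ) : ℝ := fderiv ℝ f x (0, 1)

/-- The transport operator `(L_ξ φ)^l = ∑_j ξ^j ∂_j φ^l` on vector fields over `ℝ²`. -/
def Ltrans (ξ φ : ℝ × ℝ → ℝ × ℝ) (x : ℝ × ℝ) : ℝ × ℝ :=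
  ((ξ x).1 * pd1 (fun y => (φ y).1) x + (ξ x).2 * pd2 (fun y => (φ y).1) x,
   (ξ x).1 * pd1 (fun y => (φ y).2) x + (ξ x).2 * pd2 (fun y => (φ y).2) x)

/-- The transport operator `L_ξ w = ∑_j ξ^j ∂_j w` on scalar functions over `ℝ²`. -/
def LtransScalar (ξ : ℝ × ℝ → ℝ × ℝ) (w : ℝ × ℝ → ℝ) (x : ℝ × ℝ) : ℝ :=
  (ξ x).1 * pd1 w x + (ξ x).2 * pd2 w x

/-- The operator `(T_ξ φ)^l = ∑_j φ^j ∂_l ξ^j` on vector fields over `ℝ²`. -/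
def Tsalt (ξ φ : ℝ × ℝ → ℝ × ℝ) (x : ℝ × ℝ) : ℝ × ℝ :=
  ((φ x).1 * pd1 (fun y => (ξ y).1) x + (φ x).2 * pd1 (fun y => (ξ y).2) x,
   (φ x).1 * pd2 (fun y => (ξ y).1) x + (φ x).2 * pd2 (fun y => (ξ y).2) x)

/-- The SALT operator `B_ξ φ = L_ξ φ + T_ξ φ`. -/
def SALT (ξ φ : ℝ × ℝ → ℝ × ℝ) (x : ℝ × ℝ) : ℝ × ℝ := Ltrans ξ φ x + Tsalt ξ φ x

/-- `curl f = ∂₁ f² - ∂₂ f¹` on `ℝ²`. -/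
def curl2 (f : ℝ × ℝ → ℝ × ℝ) (x : ℝ × ℝ) : ℝ :=
  pd1 (fun y => (f y).2) x - pd2 (fun y => (f y).1) x

/-- `div f = ∂₁ f¹ + ∂₂ f²` on `ℝ²`. -/
def div2 (f : ℝ × ℝ → ℝ × ℝ) (x : ℝ × ℝ) : ℝ :=
  pd1 (fun y => (f y).1) x + pd2 (fun y => (f y).2) x

/-- A `C²` function has differentiable partial derivatives. -/
lemma pd_diff {f : ℝ × ℝ → ℝ} {x : ℝ × ℝ} (hf : ContDiffAt ℝ 2 f x) (v : ℝ × ℝ) :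
    DifferentiableAt ℝ (fun y => fderiv ℝ f y v) x := by
  have h1 : ContDiffAt ℝ 1 (fderiv ℝ f) x := hf.fderiv_right (by norm_num)
  exact ((ContinuousLinearMap.apply ℝ ℝ v).differentiable.differentiableAt).comp x
    (h1.differentiableAt one_ne_zero)

lemma fderiv_pd {f : ℝ × ℝ → ℝ} {x : ℝ × ℝ} (hf : ContDiffAt ℝ 2 f x) (v w : ℝ × ℝ) :
    fderiv ℝ (fun y => fderiv ℝ f y v) x w = fderiv ℝ (fderiv ℝ f) x w v := by
  have h1 : ContDiffAt ℝ 1 (fderiv ℝ f) x := hf.fderiv_right (by norm_num)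
  have hd : DifferentiableAt ℝ (fderiv ℝ f) x := h1.differentiableAt one_ne_zero
  have : (fun y => fderiv ℝ f y v) = (ContinuousLinearMap.apply ℝ ℝ v) ∘ (fderiv ℝ f) := rfl
  rw [this, fderiv_comp x ((ContinuousLinearMap.apply ℝ ℝ v).differentiable.differentiableAt) hd,
    ContinuousLinearMap.fderiv]
  rfl

/-- Clairaut / Schwarz: mixed second partials of a `C²` function commute. -/
lemma pd_symm {f : ℝ × ℝ → ℝ} {x : ℝ × ℝ} (hf : ContDiffAt ℝ 2 f x) :
    pd1 (pd2 f) x = pd2 (pd1 f) x := by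
  have hs := hf.isSymmSndFDerivAt (le_of_eq minSmoothness_of_isRCLikeNormedField)
  show fderiv ℝ (fun y => fderiv ℝ f y (0,1)) x (1,0)
      = fderiv ℝ (fun y => fderiv ℝ f y (1,0)) x (0,1)
  rw [fderiv_pd hf, fderiv_pd hf, hs]

/-- Derivative of a sum of four products. -/
lemma pd_comb {f1 f2 f3 f4 g1 g2 g3 g4 : ℝ × ℝ → ℝ} {x : ℝ × ℝ} (v : ℝ × ℝ)
    (hf1 : DifferentiableAt ℝ f1 x) (hf2 : DifferentiableAt ℝ f2 x)
    (hf3 : DifferentiableAt ℝ f3 x) (hf4 : DifferentiableAt ℝ f4 x)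
    (hg1 : DifferentiableAt ℝ g1 x) (hg2 : DifferentiableAt ℝ g2 x)
    (hg3 : DifferentiableAt ℝ g3 x) (hg4 : DifferentiableAt ℝ g4 x) :
    fderiv ℝ (fun y => f1 y * g1 y + f2 y * g2 y + (f3 y * g3 y + f4 y * g4 y)) x v =
      (f1 x * fderiv ℝ g1 x v + g1 x * fderiv ℝ f1 x v)
      + (f2 x * fderiv ℝ g2 x v + g2 x * fderiv ℝ f2 x v)
      + ((f3 x * fderiv ℝ g3 x v + g3 x * fderiv ℝ f3 x v)
      + (f4 x * fderiv ℝ g4 x v + g4 x * fderiv ℝ f4 x v)) := by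
  have H := (((hf1.hasFDerivAt.mul hg1.hasFDerivAt).add
      (hf2.hasFDerivAt.mul hg2.hasFDerivAt)).add
      ((hf3.hasFDerivAt.mul hg3.hasFDerivAt).add (hf4.hasFDerivAt.mul hg4.hasFDerivAt)))
  rw [show (fun y => f1 y * g1 y + f2 y * g2 y + (f3 y * g3 y + f4 y * g4 y)) = f1 * g1 + f2 * g2 + (f3 * g3 + f4 * g4) from rfl, H.fderiv]
  simp [smul_eq_mul]

/-- For `ξ, φ` twice continuously differentiable on an open set `U ⊆ ℝ²`, the curl of the
SALT operator satisfies `curl (B_ξ φ) = L_ξ (curl φ) + (curl φ) · (div ξ)` on `U`. -/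
theorem curl_SALT (U : Set (ℝ × ℝ)) (hU : IsOpen U) (ξ φ : ℝ × ℝ → ℝ × ℝ)
    (hξ : ContDiffOn ℝ 2 ξ U) (hφ : ContDiffOn ℝ 2 φ U) (x : ℝ × ℝ) (hx : x ∈ U) :
    curl2 (fun y => SALT ξ φ y) x =
      LtransScalar ξ (fun y => curl2 φ y) x + curl2 φ x * div2 ξ x := by
  have hxU : U ∈ nhds x := hU.mem_nhds hx
  have hξx : ContDiffAt ℝ 2 ξ x := (hξ x hx).contDiffAt hxU
  have hφx : ContDiffAt ℝ 2 φ x := (hφ x hx).contDiffAt hxU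
  have hξ1 : ContDiffAt ℝ 2 (fun y => (ξ y).1) x := hξx.fst
  have hξ2 : ContDiffAt ℝ 2 (fun y => (ξ y).2) x := hξx.snd
  have hφ1 : ContDiffAt ℝ 2 (fun y => (φ y).1) x := hφx.fst
  have hφ2 : ContDiffAt ℝ 2 (fun y => (φ y).2) x := hφx.snd
  have dξ1 : DifferentiableAt ℝ (fun y => (ξ y).1) x := hξ1.differentiableAt two_ne_zero
  have dξ2 : DifferentiableAt ℝ (fun y => (ξ y).2) x := hξ2.differentiableAt two_ne_zero
  have dφ1 : DifferentiableAt ℝ (fun y => (φ y).1) x := hφ1.differentiableAt two_ne_zero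
  have dφ2 : DifferentiableAt ℝ (fun y => (φ y).2) x := hφ2.differentiableAt two_ne_zero
  have dp1φ1 : DifferentiableAt ℝ (fun y => pd1 (fun z => (φ z).1) y) x := pd_diff hφ1 (1,0)
  have dp2φ1 : DifferentiableAt ℝ (fun y => pd2 (fun z => (φ z).1) y) x := pd_diff hφ1 (0,1)
  have dp1φ2 : DifferentiableAt ℝ (fun y => pd1 (fun z => (φ z).2) y) x := pd_diff hφ2 (1,0)
  have dp2φ2 : DifferentiableAt ℝ (fun y => pd2 (fun z => (φ z).2) y) x := pd_diff hφ2 (0,1)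
  have dp1ξ1 : DifferentiableAt ℝ (fun y => pd1 (fun z => (ξ z).1) y) x := pd_diff hξ1 (1,0)
  have dp2ξ1 : DifferentiableAt ℝ (fun y => pd2 (fun z => (ξ z).1) y) x := pd_diff hξ1 (0,1)
  have dp1ξ2 : DifferentiableAt ℝ (fun y => pd1 (fun z => (ξ z).2) y) x := pd_diff hξ2 (1,0)
  have dp2ξ2 : DifferentiableAt ℝ (fun y => pd2 (fun z => (ξ z).2) y) x := pd_diff hξ2 (0,1)
  have hfun2 : (fun y => (SALT ξ φ y).2) = (fun y =>
      (ξ y).1 * pd1 (fun z => (φ z).2) y + (ξ y).2 * pd2 (fun z => (φ z).2) y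
      + ((φ y).1 * pd2 (fun z => (ξ z).1) y + (φ y).2 * pd2 (fun z => (ξ z).2) y)) := by
    funext y; simp only [SALT, Ltrans, Tsalt, Prod.snd_add]
  have hfun1 : (fun y => (SALT ξ φ y).1) = (fun y =>
      (ξ y).1 * pd1 (fun z => (φ z).1) y + (ξ y).2 * pd2 (fun z => (φ z).1) y
      + ((φ y).1 * pd1 (fun z => (ξ z).1) y + (φ y).2 * pd1 (fun z => (ξ z).2) y)) := by
    funext y; simp only [SALT, Ltrans, Tsalt, Prod.fst_add]
  have e2 : pd1 (fun y => (SALT ξ φ y).2) x =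
      ((ξ x).1 * pd1 (pd1 (fun z => (φ z).2)) x
        + pd1 (fun z => (φ z).2) x * pd1 (fun z => (ξ z).1) x)
      + ((ξ x).2 * pd1 (pd2 (fun z => (φ z).2)) x
        + pd2 (fun z => (φ z).2) x * pd1 (fun z => (ξ z).2) x)
      + (((φ x).1 * pd1 (pd2 (fun z => (ξ z).1)) x
        + pd2 (fun z => (ξ z).1) x * pd1 (fun z => (φ z).1) x)
      + ((φ x).2 * pd1 (pd2 (fun z => (ξ z).2)) x
        + pd2 (fun z => (ξ z).2) x * pd1 (fun z => (φ z).2) x)) := by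
    show fderiv ℝ (fun y => (SALT ξ φ y).2) x (1,0) = _
    rw [hfun2]
    exact pd_comb (1,0) dξ1 dξ2 dφ1 dφ2 dp1φ2 dp2φ2 dp2ξ1 dp2ξ2
  have e1 : pd2 (fun y => (SALT ξ φ y).1) x =
      ((ξ x).1 * pd2 (pd1 (fun z => (φ z).1)) x
        + pd1 (fun z => (φ z).1) x * pd2 (fun z => (ξ z).1) x)
      + ((ξ x).2 * pd2 (pd2 (fun z => (φ z).1)) x
        + pd2 (fun z => (φ z).1) x * pd2 (fun z => (ξ z).2) x)
      + (((φ x).1 * pd2 (pd1 (fun z => (ξ z).1)) x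
        + pd1 (fun z => (ξ z).1) x * pd2 (fun z => (φ z).1) x)
      + ((φ x).2 * pd2 (pd1 (fun z => (ξ z).2)) x
        + pd1 (fun z => (ξ z).2) x * pd2 (fun z => (φ z).2) x)) := by
    show fderiv ℝ (fun y => (SALT ξ φ y).1) x (0,1) = _
    rw [hfun1]
    exact pd_comb (0,1) dξ1 dξ2 dφ1 dφ2 dp1φ1 dp2φ1 dp1ξ1 dp1ξ2
  have ec1 : pd1 (fun y => pd1 (fun z => (φ z).2) y - pd2 (fun z => (φ z).1) y) x
      = pd1 (pd1 (fun z => (φ z).2)) x - pd1 (pd2 (fun z => (φ z).1)) x := by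
    show fderiv ℝ (fun y => pd1 (fun z => (φ z).2) y - pd2 (fun z => (φ z).1) y) x (1,0) = _
    rw [fderiv_fun_sub dp1φ2 dp2φ1]
    rfl
  have ec2 : pd2 (fun y => pd1 (fun z => (φ z).2) y - pd2 (fun z => (φ z).1) y) x
      = pd2 (pd1 (fun z => (φ z).2)) x - pd2 (pd2 (fun z => (φ z).1)) x := by
    show fderiv ℝ (fun y => pd1 (fun z => (φ z).2) y - pd2 (fun z => (φ z).1) y) x (0,1) = _
    rw [fderiv_fun_sub dp1φ2 dp2φ1]
    rfl
  simp only [curl2, LtransScalar, div2]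
  rw [e1, e2, ec1, ec2, pd_symm hφ1, pd_symm hφ2, pd_symm hξ1, pd_symm hξ2]
  ring

end
end

section
/- Let U ⊆ ℝ² be open and let ξ, φ : ℝ² → ℝ² be twice continuously differentiable on U, with ξ divergence-free on U (∂₁ξ¹ + ∂₂ξ² = 0 at every point of U). Then the curl of the SALT operator is the transport of the curl: for every x ∈ U, curl(B_ξφ)(x) = (L_ξ(curl φ))(x), i.e. ∂₁(B_ξφ)²(x) − ∂₂(B_ξφ)¹(x) = Σ_{j=1}^{2} ξ^j(x)·∂_j(∂₁φ² − ∂₂φ¹)(x). -/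
noncomputable section

section Aux


variable {U : Set (ℝ × ℝ)} {x : ℝ × ℝ} {f : ℝ × ℝ → ℝ}

lemma aux_baseDiff (hU : IsOpen U) (hf : ContDiffOn ℝ 2 f U) (hx : x ∈ U) :
    DifferentiableAt ℝ f x :=
  (hf.differentiableOn (by norm_num)).differentiableAt (hU.mem_nhds hx)

lemma aux_fderivDiff (hU : IsOpen U) (hf : ContDiffOn ℝ 2 f U) (hx : x ∈ U) :
    DifferentiableAt ℝ (fderiv ℝ f) x := by
  have h1 : ContDiffOn ℝ 1 (fun y => fderiv ℝ f y) U :=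
    hf.fderiv_of_isOpen hU (by norm_num)
  exact (h1.differentiableOn one_ne_zero).differentiableAt (hU.mem_nhds hx)

lemma aux_pdvDiff (hU : IsOpen U) (hf : ContDiffOn ℝ 2 f U) (hx : x ∈ U) (v : ℝ × ℝ) :
    DifferentiableAt ℝ (fun y => fderiv ℝ f y v) x :=
  (aux_fderivDiff hU hf hx).clm_apply (differentiableAt_const _)

lemma aux_symm (hU : IsOpen U) (hf : ContDiffOn ℝ 2 f U) (hx : x ∈ U) :
    pd1 (pd2 f) x = pd2 (pd1 f) x := by
  have hf' := aux_fderivDiff hU hf hx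
  have hsymm : IsSymmSndFDerivAt ℝ f x :=
    ((hf x hx).contDiffAt (hU.mem_nhds hx)).isSymmSndFDerivAt (by norm_num)
  have h1 : pd1 (pd2 f) x = fderiv ℝ (fderiv ℝ f) x ((1:ℝ), (0:ℝ)) (0, 1) := by
    show fderiv ℝ (fun y => fderiv ℝ f y (0, 1)) x (1, 0) = _
    rw [fderiv_clm_apply hf' (differentiableAt_const _)]
    simp
  have h2 : pd2 (pd1 f) x = fderiv ℝ (fderiv ℝ f) x ((0:ℝ), (1:ℝ)) (1, 0) := by
    show fderiv ℝ (fun y => fderiv ℝ f y (1, 0)) x (0, 1) = _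
    rw [fderiv_clm_apply hf' (differentiableAt_const _)]
    simp
  rw [h1, h2]
  exact hsymm _ _

lemma aux_expand {f1 f2 f3 f4 f5 f6 f7 f8 : ℝ × ℝ → ℝ} (v : ℝ × ℝ)
    (h1 : DifferentiableAt ℝ f1 x) (h2 : DifferentiableAt ℝ f2 x)
    (h3 : DifferentiableAt ℝ f3 x) (h4 : DifferentiableAt ℝ f4 x)
    (h5 : DifferentiableAt ℝ f5 x) (h6 : DifferentiableAt ℝ f6 x)
    (h7 : DifferentiableAt ℝ f7 x) (h8 : DifferentiableAt ℝ f8 x) :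
    fderiv ℝ (fun y => f1 y * f2 y + f3 y * f4 y + (f5 y * f6 y + f7 y * f8 y)) x v
      = f1 x * fderiv ℝ f2 x v + f2 x * fderiv ℝ f1 x v
        + f3 x * fderiv ℝ f4 x v + f4 x * fderiv ℝ f3 x v
        + f5 x * fderiv ℝ f6 x v + f6 x * fderiv ℝ f5 x v
        + f7 x * fderiv ℝ f8 x v + f8 x * fderiv ℝ f7 x v := by
  have H := (((h1.hasFDerivAt.mul h2.hasFDerivAt).add
      (h3.hasFDerivAt.mul h4.hasFDerivAt)).add
      ((h5.hasFDerivAt.mul h6.hasFDerivAt).add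
      (h7.hasFDerivAt.mul h8.hasFDerivAt))).fderiv
  rw [show (fun y => f1 y * f2 y + f3 y * f4 y + (f5 y * f6 y + f7 y * f8 y)) = f1 * f2 + f3 * f4 + (f5 * f6 + f7 * f8) from rfl, H]
  simp [smul_eq_mul]
  ring

lemma aux_sub {g1 g2 : ℝ × ℝ → ℝ} (v : ℝ × ℝ)
    (h1 : DifferentiableAt ℝ g1 x) (h2 : DifferentiableAt ℝ g2 x) :
    fderiv ℝ (fun y => g1 y - g2 y) x v = fderiv ℝ g1 x v - fderiv ℝ g2 x v := by
  rw [show (fun y => g1 y - g2 y) = g1 - g2 from rfl, (h1.hasFDerivAt.sub h2.hasFDerivAt).fderiv]; simp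


end Aux

/-- For `ξ, φ` twice continuously differentiable on an open set `U ⊆ ℝ²` with `ξ`
divergence-free on `U`, the curl of the SALT operator is the transport of the curl:
`curl (B_ξ φ) = L_ξ (curl φ)` on `U`. -/
theorem curl_SALT_of_divFree (U : Set (ℝ × ℝ)) (hU : IsOpen U) (ξ φ : ℝ × ℝ → ℝ × ℝ)
    (hξ : ContDiffOn ℝ 2 ξ U) (hφ : ContDiffOn ℝ 2 φ U)
    (hdiv : ∀ y ∈ U, div2 ξ y = 0) (x : ℝ × ℝ) (hx : x ∈ U) :
    curl2 (fun y => SALT ξ φ y) x = LtransScalar ξ (fun y => curl2 φ y) x := by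
  have hCa : ContDiffOn ℝ 2 (fun y => (ξ y).1) U := hξ.fst
  have hCb : ContDiffOn ℝ 2 (fun y => (ξ y).2) U := hξ.snd
  have hCp : ContDiffOn ℝ 2 (fun y => (φ y).1) U := hφ.fst
  have hCq : ContDiffOn ℝ 2 (fun y => (φ y).2) U := hφ.snd
  have Da := aux_baseDiff hU hCa hx
  have Db := aux_baseDiff hU hCb hx
  have Dp := aux_baseDiff hU hCp hx
  have Dq := aux_baseDiff hU hCq hx
  have D1a : DifferentiableAt ℝ (pd1 (fun y => (ξ y).1)) x := aux_pdvDiff hU hCa hx (1,0)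
  have D2a : DifferentiableAt ℝ (pd2 (fun y => (ξ y).1)) x := aux_pdvDiff hU hCa hx (0,1)
  have D1b : DifferentiableAt ℝ (pd1 (fun y => (ξ y).2)) x := aux_pdvDiff hU hCb hx (1,0)
  have D2b : DifferentiableAt ℝ (pd2 (fun y => (ξ y).2)) x := aux_pdvDiff hU hCb hx (0,1)
  have D1p : DifferentiableAt ℝ (pd1 (fun y => (φ y).1)) x := aux_pdvDiff hU hCp hx (1,0)
  have D2p : DifferentiableAt ℝ (pd2 (fun y => (φ y).1)) x := aux_pdvDiff hU hCp hx (0,1)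
  have D1q : DifferentiableAt ℝ (pd1 (fun y => (φ y).2)) x := aux_pdvDiff hU hCq hx (1,0)
  have D2q : DifferentiableAt ℝ (pd2 (fun y => (φ y).2)) x := aux_pdvDiff hU hCq hx (0,1)
  -- component functions of SALT
  have hS2 : (fun y => (SALT ξ φ y).2) =
      (fun y => (ξ y).1 * pd1 (fun z => (φ z).2) y + (ξ y).2 * pd2 (fun z => (φ z).2) y
        + ((φ y).1 * pd2 (fun z => (ξ z).1) y + (φ y).2 * pd2 (fun z => (ξ z).2) y)) := by
    funext y; simp [SALT, Ltrans, Tsalt]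
  have hS1 : (fun y => (SALT ξ φ y).1) =
      (fun y => (ξ y).1 * pd1 (fun z => (φ z).1) y + (ξ y).2 * pd2 (fun z => (φ z).1) y
        + ((φ y).1 * pd1 (fun z => (ξ z).1) y + (φ y).2 * pd1 (fun z => (ξ z).2) y)) := by
    funext y; simp [SALT, Ltrans, Tsalt]
  have E2 : pd1 (fun y => (SALT ξ φ y).2) x
      = (ξ x).1 * pd1 (pd1 (fun z => (φ z).2)) x + pd1 (fun z => (φ z).2) x * pd1 (fun y => (ξ y).1) x
        + (ξ x).2 * pd1 (pd2 (fun z => (φ z).2)) x + pd2 (fun z => (φ z).2) x * pd1 (fun y => (ξ y).2) x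
        + (φ x).1 * pd1 (pd2 (fun z => (ξ z).1)) x + pd2 (fun z => (ξ z).1) x * pd1 (fun y => (φ y).1) x
        + (φ x).2 * pd1 (pd2 (fun z => (ξ z).2)) x + pd2 (fun z => (ξ z).2) x * pd1 (fun y => (φ y).2) x := by
    rw [show pd1 (fun y => (SALT ξ φ y).2) x = pd1 _ x from congrArg (fun g => pd1 g x) hS2]
    exact aux_expand (1,0) Da D1q Db D2q Dp D2a Dq D2b
  have E1 : pd2 (fun y => (SALT ξ φ y).1) x
      = (ξ x).1 * pd2 (pd1 (fun z => (φ z).1)) x + pd1 (fun z => (φ z).1) x * pd2 (fun y => (ξ y).1) x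
        + (ξ x).2 * pd2 (pd2 (fun z => (φ z).1)) x + pd2 (fun z => (φ z).1) x * pd2 (fun y => (ξ y).2) x
        + (φ x).1 * pd2 (pd1 (fun z => (ξ z).1)) x + pd1 (fun z => (ξ z).1) x * pd2 (fun y => (φ y).1) x
        + (φ x).2 * pd2 (pd1 (fun z => (ξ z).2)) x + pd1 (fun z => (ξ z).2) x * pd2 (fun y => (φ y).2) x := by
    rw [show pd2 (fun y => (SALT ξ φ y).1) x = pd2 _ x from congrArg (fun g => pd2 g x) hS1]
    exact aux_expand (0,1) Da D1p Db D2p Dp D1a Dq D1b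
  -- curl of φ
  have hc1 : pd1 (fun y => curl2 φ y) x
      = pd1 (pd1 (fun z => (φ z).2)) x - pd1 (pd2 (fun z => (φ z).1)) x :=
    aux_sub (1,0) D1q D2p
  have hc2 : pd2 (fun y => curl2 φ y) x
      = pd2 (pd1 (fun z => (φ z).2)) x - pd2 (pd2 (fun z => (φ z).1)) x :=
    aux_sub (0,1) D1q D2p
  -- symmetry of second derivatives
  have hsa := aux_symm hU hCa hx
  have hsb := aux_symm hU hCb hx
  have hsp := aux_symm hU hCp hx
  have hsq := aux_symm hU hCq hx
  -- divergence free
  have hd : pd1 (fun y => (ξ y).1) x + pd2 (fun y => (ξ y).2) x = 0 := hdiv x hx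
  show pd1 (fun y => (SALT ξ φ y).2) x - pd2 (fun y => (SALT ξ φ y).1) x
      = (ξ x).1 * pd1 (fun y => curl2 φ y) x + (ξ x).2 * pd2 (fun y => curl2 φ y) x
  rw [E1, E2, hc1, hc2]
  linear_combination (pd1 (fun z => (φ z).2) x - pd2 (fun z => (φ z).1) x) * hd
    + (φ x).1 * hsa + (φ x).2 * hsb + (ξ x).1 * hsp + (ξ x).2 * hsq

end
end
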